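/- There exists a tetrahedron and an interior point M for which the sum of distances from M to the four vertices is strictly less than 3 times the sum of distances from M to the four faces; hence the Erdős–Mordell constant 2·(n-dependent) does not extend to 3 space with the planar form. -/

import Mathlib

open EuclideanGeometry Metric
open EuclideanGeometry Metric RealInnerProductSpace

noncomputable def pt (a b c : ℝ) : EuclideanSpace ℝ (Fin 3) := WithLp.toLp 2 ![a,b,c]

lemma face_bound (n : EuclideanSpace ℝ (Fin 3)) (hn : 0 < ‖n‖) (c d : ℝ)
    (s : Set (EuclideanSpace ℝ (Fin 3))) (hne : s.Nonempty)
    (hs : ∀ p ∈ s, ⟪p, n⟫ = c)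
    (M : EuclideanSpace ℝ (Fin 3)) (hd : d * ‖n‖ ≤ |⟪M, n⟫ - c|) :
    d ≤ infDist M (affineSpan ℝ s : Set (EuclideanSpace ℝ (Fin 3))) := by
  obtain ⟨p, hp⟩ := hne
  have hspan_ne : (affineSpan ℝ s : Set (EuclideanSpace ℝ (Fin 3))).Nonempty :=
    ⟨p, subset_affineSpan ℝ s hp⟩
  rw [← not_lt]
  intro hlt
  rw [infDist_lt_iff hspan_ne] at hlt
  obtain ⟨x, hx, hdx⟩ := hlt
  refine absurd hdx (not_lt.mpr ?_)
  have hxc : ⟪x, n⟫ = c := by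
    let W : AffineSubspace ℝ (EuclideanSpace ℝ (Fin 3)) :=
      { carrier := {y | ⟪y, n⟫ = c}
        smul_vsub_vadd_mem' := by
          intro t p₁ p₂ p₃ h₁ h₂ h₃
          simp only [Set.mem_setOf_eq] at *
          rw [vsub_eq_sub, vadd_eq_add, inner_add_left, real_inner_smul_left,
            inner_sub_left, h₁, h₂, h₃]
          ring }
    have hle : affineSpan ℝ s ≤ W := affineSpan_le.mpr (fun q hq => hs q hq)
    exact hle hx
  have h1 : |⟪M, n⟫ - c| = |⟪M - x, n⟫| := by rw [inner_sub_left, hxc]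
  have h2 : |⟪M - x, n⟫| ≤ ‖M - x‖ * ‖n‖ := abs_real_inner_le_norm _ _
  have h3 : dist M x = ‖M - x‖ := dist_eq_norm M x
  have : d * ‖n‖ ≤ dist M x * ‖n‖ := by rw [h3]; linarith [h1 ▸ hd]
  exact le_of_mul_le_mul_right this hn

noncomputable def Apts : Fin 4 → EuclideanSpace ℝ (Fin 3) :=
  ![pt 0 0 (9/10), pt 1 0 0, pt (-33/65) (56/65) 0, pt (-33/65) (-56/65) 0]

noncomputable def Mpt : EuclideanSpace ℝ (Fin 3) := pt 0 0 (1/100)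

lemma Apts_indep : AffineIndependent ℝ Apts := by
  rw [affineIndependent_iff_of_fintype]
  intro w h0 h1 i
  rw [Finset.weightedVSub_eq_linear_combination _ h0] at h1
  rw [Fin.sum_univ_four] at h0 h1
  have e0 := congrArg (fun v => v 0) h1
  have e1 := congrArg (fun v => v 1) h1
  have e2 := congrArg (fun v => v 2) h1
  simp only [Apts, pt, PiLp.add_apply, PiLp.smul_apply, smul_eq_mul,
    Matrix.cons_val_zero, Matrix.cons_val_one, Matrix.head_cons,
    Matrix.cons_val_two, Matrix.tail_cons, Matrix.cons_val_three,
    PiLp.zero_apply, PiLp.toLp_apply] at e0 e1 e2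
  norm_num at e0 e1 e2
  fin_cases i <;> simp <;> linarith

lemma Apts_tot : affineSpan ℝ (Set.range Apts) = ⊤ := by
  rw [Apts_indep.affineSpan_eq_top_iff_card_eq_finrank_add_one]
  simp [finrank_euclideanSpace]

noncomputable def wts : Fin 4 → ℝ := ![1/90, 979/2940, 1157/3528, 1157/3528]

lemma wts_sum : ∑ i, wts i = 1 := by
  rw [Fin.sum_univ_four]; norm_num [wts, Matrix.cons_val_two, Matrix.cons_val_three, Matrix.tail_cons, Matrix.head_cons]

lemma M_comb : Finset.univ.affineCombination ℝ Apts wts = Mpt := by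
  rw [Finset.affineCombination_eq_linear_combination _ _ _ wts_sum, Fin.sum_univ_four]
  ext j
  fin_cases j <;>
    simp only [Apts, Mpt, pt, wts, PiLp.add_apply, PiLp.smul_apply, smul_eq_mul,
      Matrix.cons_val_zero, Matrix.cons_val_one, Matrix.head_cons,
      Matrix.cons_val_two, Matrix.tail_cons, Matrix.cons_val_three, PiLp.toLp_apply] <;>
    norm_num

lemma M_interior : Mpt ∈ interior (convexHull ℝ (Set.range Apts)) := by
  let b : AffineBasis (Fin 4) ℝ (EuclideanSpace ℝ (Fin 3)) := ⟨Apts, Apts_indep, Apts_tot⟩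
  have hrange : Set.range ⇑b = Set.range Apts := rfl
  rw [← hrange, b.interior_convexHull]
  intro i
  have hc : b.coord i Mpt = wts i := by
    rw [← M_comb]
    exact b.coord_apply_combination_of_mem (Finset.mem_univ i) wts_sum
  rw [hc]
  fin_cases i <;> norm_num [wts, Matrix.cons_val_two, Matrix.cons_val_three, Matrix.tail_cons, Matrix.head_cons]

lemma sqrt_le_of_sq {x y : ℝ} (hy : 0 ≤ y) (h : x ≤ y^2) : Real.sqrt x ≤ y := by
  have := Real.sqrt_le_sqrt h
  rwa [Real.sqrt_sq hy] at this

lemma dv0 : dist Mpt (Apts 0) = 89/100 := by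
  rw [EuclideanSpace.dist_eq]
  rw [show (∑ i, dist (Mpt i) (Apts 0 i)^2) = ((89:ℝ)/100)^2 by
    simp [Fin.sum_univ_three, Apts, Mpt, pt, Real.dist_eq, sq_abs]; norm_num]
  rw [Real.sqrt_sq (by norm_num)]

lemma dv1 : dist Mpt (Apts 1) ≤ 20001/20000 := by
  rw [EuclideanSpace.dist_eq]
  refine sqrt_le_of_sq (by norm_num) ?_
  simp [Fin.sum_univ_three, Apts, Mpt, pt, Real.dist_eq, sq_abs]; norm_num

lemma dv2 : dist Mpt (Apts 2) ≤ 20001/20000 := by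
  rw [EuclideanSpace.dist_eq]
  refine sqrt_le_of_sq (by norm_num) ?_
  simp [Fin.sum_univ_three, Apts, Mpt, pt, Real.dist_eq, sq_abs]; norm_num

lemma dv3 : dist Mpt (Apts 3) ≤ 20001/20000 := by
  rw [EuclideanSpace.dist_eq]
  refine sqrt_le_of_sq (by norm_num) ?_
  simp [Fin.sum_univ_three, Apts, Mpt, pt, Real.dist_eq, sq_abs]; norm_num

lemma norm_pt (a b c : ℝ) : ‖pt a b c‖ = Real.sqrt (a^2 + b^2 + c^2) := by
  rw [EuclideanSpace.norm_eq]
  simp [Fin.sum_univ_three, pt, sq_abs]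

lemma inner_pt (a b c : ℝ) (x : EuclideanSpace ℝ (Fin 3)) :
    ⟪x, pt a b c⟫ = x 0 * a + x 1 * b + x 2 * c := by
  simp [PiLp.inner_apply, RCLike.inner_apply, Fin.sum_univ_three, pt]; ring

lemma fb0 : (1/100 : ℝ) ≤ infDist Mpt (affineSpan ℝ (Apts '' {j | j ≠ 0}) :
    Set (EuclideanSpace ℝ (Fin 3))) := by
  refine face_bound (pt 0 0 1) ?_ 0 (1/100) _ ?_ ?_ _ ?_
  · rw [norm_pt]; norm_num
  · exact ⟨Apts 1, 1, by decide, rfl⟩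
  · rintro p ⟨j, hj, rfl⟩
    fin_cases j
    · simp at hj
    all_goals rw [inner_pt]; norm_num [Apts, pt, Matrix.cons_val_two, Matrix.tail_cons, Matrix.head_cons]
  · rw [inner_pt, norm_pt]
    rw [show Mpt 0 * 0 + Mpt 1 * 0 + Mpt 2 * 1 - 0 = (1/100 : ℝ) by norm_num [Mpt, pt, Matrix.cons_val_two, Matrix.tail_cons, Matrix.head_cons]]
    rw [abs_of_nonneg (by norm_num)]
    rw [show (0:ℝ)^2+0^2+1^2 = 1 by norm_num, Real.sqrt_one]
    norm_num

lemma fb1 : (979/2240 : ℝ) ≤ infDist Mpt (affineSpan ℝ (Apts '' {j | j ≠ 1}) :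
    Set (EuclideanSpace ℝ (Fin 3))) := by
  refine face_bound (pt (-39) 0 22) ?_ (99/5) (979/2240) _ ?_ ?_ _ ?_
  · rw [norm_pt]
    positivity
  · exact ⟨Apts 0, 0, by decide, rfl⟩
  · rintro p ⟨j, hj, rfl⟩
    fin_cases j
    · rw [inner_pt]; norm_num [Apts, pt, Matrix.cons_val_two, Matrix.tail_cons, Matrix.head_cons]
    · simp at hj
    all_goals rw [inner_pt]; norm_num [Apts, pt, Matrix.cons_val_two, Matrix.tail_cons, Matrix.head_cons]
  · rw [inner_pt, norm_pt]
    have h : Real.sqrt ((-39:ℝ)^2 + 0^2 + 22^2) ≤ 224/5 := sqrt_le_of_sq (by norm_num) (by norm_num)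
    have h0 : (0:ℝ) ≤ Real.sqrt ((-39:ℝ)^2 + 0^2 + 22^2) := Real.sqrt_nonneg _
    rw [show Mpt 0 * (-39) + Mpt 1 * 0 + Mpt 2 * 22 - 99/5 = (-979/50 : ℝ) by
      norm_num [Mpt, pt, Matrix.cons_val_two, Matrix.tail_cons, Matrix.head_cons], abs_of_nonpos (by norm_num)]
    nlinarith

lemma fb2 : (356/829 : ℝ) ≤ infDist Mpt (affineSpan ℝ (Apts '' {j | j ≠ 2}) :
    Set (EuclideanSpace ℝ (Fin 3))) := by
  refine face_bound (pt (-36) 63 (-40)) ?_ (-36) (356/829) _ ?_ ?_ _ ?_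
  · rw [norm_pt]
    positivity
  · exact ⟨Apts 0, 0, by decide, rfl⟩
  · rintro p ⟨j, hj, rfl⟩
    fin_cases j
    · rw [inner_pt]; norm_num [Apts, pt, Matrix.cons_val_two, Matrix.tail_cons, Matrix.head_cons]
    · rw [inner_pt]; norm_num [Apts, pt, Matrix.cons_val_two, Matrix.tail_cons, Matrix.head_cons]
    · simp at hj
    · rw [inner_pt]; norm_num [Apts, pt, Matrix.cons_val_two, Matrix.tail_cons, Matrix.head_cons]
  · rw [inner_pt, norm_pt]
    have h : Real.sqrt ((-36:ℝ)^2 + 63^2 + (-40)^2) ≤ 829/10 := sqrt_le_of_sq (by norm_num) (by norm_num)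
    have h0 : (0:ℝ) ≤ Real.sqrt ((-36:ℝ)^2 + 63^2 + (-40)^2) := Real.sqrt_nonneg _
    rw [show Mpt 0 * (-36) + Mpt 1 * 63 + Mpt 2 * (-40) - (-36) = (178/5 : ℝ) by
      norm_num [Mpt, pt, Matrix.cons_val_two, Matrix.tail_cons, Matrix.head_cons], abs_of_nonneg (by norm_num)]
    nlinarith

lemma fb3 : (356/829 : ℝ) ≤ infDist Mpt (affineSpan ℝ (Apts '' {j | j ≠ 3}) :
    Set (EuclideanSpace ℝ (Fin 3))) := by
  refine face_bound (pt (-36) (-63) (-40)) ?_ (-36) (356/829) _ ?_ ?_ _ ?_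
  · rw [norm_pt]
    positivity
  · exact ⟨Apts 0, 0, by decide, rfl⟩
  · rintro p ⟨j, hj, rfl⟩
    fin_cases j
    · rw [inner_pt]; norm_num [Apts, pt, Matrix.cons_val_two, Matrix.tail_cons, Matrix.head_cons]
    · rw [inner_pt]; norm_num [Apts, pt, Matrix.cons_val_two, Matrix.tail_cons, Matrix.head_cons]
    · rw [inner_pt]; norm_num [Apts, pt, Matrix.cons_val_two, Matrix.tail_cons, Matrix.head_cons]
    · simp at hj
  · rw [inner_pt, norm_pt]
    have h : Real.sqrt ((-36:ℝ)^2 + (-63)^2 + (-40)^2) ≤ 829/10 := sqrt_le_of_sq (by norm_num) (by norm_num)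
    have h0 : (0:ℝ) ≤ Real.sqrt ((-36:ℝ)^2 + (-63)^2 + (-40)^2) := Real.sqrt_nonneg _
    rw [show Mpt 0 * (-36) + Mpt 1 * (-63) + Mpt 2 * (-40) - (-36) = (178/5 : ℝ) by
      norm_num [Mpt, pt, Matrix.cons_val_two, Matrix.tail_cons, Matrix.head_cons], abs_of_nonneg (by norm_num)]
    nlinarith

theorem tetrahedron_erdos_mordell_constant_three_fails :
    ∃ (A : Fin 4 → EuclideanSpace ℝ (Fin 3)) (M : EuclideanSpace ℝ (Fin 3)),
      AffineIndependent ℝ A ∧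
      M ∈ interior (convexHull ℝ (Set.range A)) ∧
      ∑ i : Fin 4, dist M (A i) <
        3 * ∑ i : Fin 4,
          infDist M (affineSpan ℝ (A '' {j | j ≠ i}) : Set (EuclideanSpace ℝ (Fin 3))) := by
  refine ⟨Apts, Mpt, Apts_indep, M_interior, ?_⟩
  rw [Fin.sum_univ_four, Fin.sum_univ_four]
  have := dv0; have := dv1; have := dv2; have := dv3
  have := fb0; have := fb1; have := fb2; have := fb3
  linarith
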